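/- Let U : ℕ → ℕ be defined by U_0 = 0, U_i = 2^{i−1} for 1 ≤ i ≤ q−1, and U_{n+q} = U_{n+q−1} + U_{n+q−2} + ⋯ + U_n for all n ≥ 0. Then for every integer n ≥ 1, U_n = c_n(parts ≢ 0 (mod q)), i.e., U_n equals the number of compositions of n all of whose parts are not divisible by q. -/

import Mathlib

open Finset

/-- Finset of all compositions (lists of positive naturals) of `m`. -/
private def allComps : ℕ → Finset (List ℕ)
  | 0 => {[]}
  | (m+1) => (Finset.range (m+1)).biUnion
      (fun k => (allComps (m - k)).image (List.cons (k+1)))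
  decreasing_by omega

private lemma mem_allComps : ∀ (m : ℕ) (l : List ℕ),
    l ∈ allComps m ↔ (∀ x ∈ l, 0 < x) ∧ l.sum = m := by
  intro m
  induction m using Nat.strong_induction_on with
  | _ m ih =>
    match m with
    | 0 =>
      intro l
      simp only [allComps, Finset.mem_singleton]
      constructor
      · rintro rfl; simp
      · rintro ⟨hpos, hsum⟩
        cases l with
        | nil => rfl
        | cons x t =>
          exfalso
          have := hpos x (by simp)
          simp only [List.sum_cons] at hsum
          omega
    | (m+1) =>
      intro l
      rw [allComps]
      simp only [Finset.mem_biUnion, Finset.mem_range, Finset.mem_image]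
      constructor
      · rintro ⟨k, hk, t, ht, rfl⟩
        rw [ih (m - k) (by omega)] at ht
        obtain ⟨hpos, hsum⟩ := ht
        refine ⟨?_, ?_⟩
        · intro x hx
          rcases List.mem_cons.1 hx with rfl | hx
          · omega
          · exact hpos x hx
        · simp only [List.sum_cons, hsum]; omega
      · rintro ⟨hpos, hsum⟩
        cases l with
        | nil => simp at hsum
        | cons x t =>
          have hx : 0 < x := hpos x (by simp)
          have hsum' : x + t.sum = m + 1 := by simpa using hsum
          refine ⟨x - 1, by omega, t, ?_, by congr 1; omega⟩
          rw [ih (m - (x - 1)) (by omega)]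
          exact ⟨fun y hy => hpos y (List.mem_cons_of_mem _ hy), by omega⟩

/-- Number of compositions of `m` with no part divisible by `q`. -/
private def ccount (q m : ℕ) : ℕ :=
  ((allComps m).filter (fun l => ∀ x ∈ l, x % q ≠ 0)).card

private lemma ccount_zero (q : ℕ) : ccount q 0 = 1 := by
  unfold ccount
  rw [show allComps 0 = {[]} from by rw [allComps]]
  rw [Finset.filter_singleton, if_pos (by simp)]
  rfl

private lemma ccount_succ (q m : ℕ) :
    ccount q (m+1) = ∑ k ∈ Finset.range (m+1),
      if (k+1) % q ≠ 0 then ccount q (m - k) else 0 := by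
  unfold ccount
  conv_lhs => rw [allComps]
  rw [Finset.filter_biUnion, Finset.card_biUnion]
  · refine Finset.sum_congr rfl ?_
    intro k _
    rw [Finset.filter_image]
    by_cases h : (k+1) % q = 0
    · rw [if_neg (not_not_intro h)]
      rw [Finset.filter_false_of_mem, Finset.image_empty, Finset.card_empty]
      intro t _ hP
      exact hP (k+1) (by simp) h
    · rw [if_pos h, Finset.card_image_of_injective _ (List.cons_injective)]
      congr 1
      apply Finset.filter_congr
      intro t _
      simp only [List.mem_cons, eq_iff_iff]
      constructor
      · intro hP x hx; exact hP x (Or.inr hx)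
      · intro hP x hx
        rcases hx with rfl | hx
        · exact h
        · exact hP x hx
  · intro a _ b _ hab
    simp only [Function.onFun]
    rw [Finset.disjoint_left]
    intro l hla hlb
    rw [Finset.mem_filter, Finset.mem_image] at hla hlb
    obtain ⟨⟨ta, _, rfl⟩, _⟩ := hla
    obtain ⟨⟨tb, _, heq⟩, _⟩ := hlb
    exact hab (by injection heq with h1 _; omega)

/-- Auxiliary: sum of the "forbidden" terms. -/
private def bsum (q m : ℕ) : ℕ :=
  ∑ k ∈ Finset.range m, if (k+1) % q = 0 then ccount q (m - 1 - k) else 0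

private lemma ccount_split (q m : ℕ) :
    ccount q (m+1) + bsum q (m+1) = ∑ t ∈ Finset.range (m+1), ccount q t := by
  rw [ccount_succ]
  unfold bsum
  rw [← Finset.sum_add_distrib]
  have h1 : ∀ k ∈ Finset.range (m+1),
      ((if (k+1) % q ≠ 0 then ccount q (m - k) else 0)
        + (if (k+1) % q = 0 then ccount q (m + 1 - 1 - k) else 0))
        = ccount q (m - k) := by
    intro k _
    have h2 : m + 1 - 1 - k = m - k := by omega
    rw [h2]
    by_cases h : (k+1) % q = 0 <;> simp [h]
  rw [Finset.sum_congr rfl h1]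
  exact Finset.sum_range_reflect (fun t => ccount q t) (m+1)

private lemma bsum_shift (q m : ℕ) (hq : 2 ≤ q) :
    bsum q (m + q) = ccount q m + bsum q m := by
  unfold bsum
  rw [show m + q = q + m from by omega, Finset.sum_range_add]
  congr 1
  · rw [Finset.sum_eq_single_of_mem (q-1) (Finset.mem_range.2 (by omega))]
    · rw [if_pos (by rw [show q - 1 + 1 = q from by omega]; simp)]
      congr 1
      omega
    · intro k hk hne
      rw [Finset.mem_range] at hk
      rw [if_neg]
      rw [Nat.mod_eq_of_lt (by omega)]
      omega
  · refine Finset.sum_congr rfl ?_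
    intro k hk
    rw [Finset.mem_range] at hk
    have h1 : (q + k + 1) % q = (k+1) % q := by
      rw [show q + k + 1 = q + (k+1) from by omega, Nat.add_mod_left]
    rw [h1, show q + m - 1 - (q + k) = m - 1 - k from by omega]

private lemma ccount_rec (q m : ℕ) (hq : 2 ≤ q) (hm : 1 ≤ m) :
    ccount q (m + q) = ∑ j ∈ Finset.range q, ccount q (m + j) := by
  obtain ⟨m', rfl⟩ : ∃ m', m = m' + 1 := ⟨m - 1, by omega⟩
  have E1 := ccount_split q (m' + q)
  have E2 := ccount_split q m'
  have hB : bsum q (m' + 1 + q) = ccount q (m' + 1) + bsum q (m' + 1) :=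
    bsum_shift q (m' + 1) hq
  have hA : ∑ t ∈ Finset.range (m' + 1 + q), ccount q t
      = (∑ t ∈ Finset.range (m' + 1), ccount q t)
        + ∑ j ∈ Finset.range q, ccount q (m' + 1 + j) :=
    Finset.sum_range_add (fun t => ccount q t) (m' + 1) q
  rw [show m' + q + 1 = m' + 1 + q from by omega] at E1
  omega

private lemma sum_two_pow (n : ℕ) : ∑ t ∈ Finset.range n, 2 ^ t = 2 ^ n - 1 := by
  induction n with
  | zero => simp
  | succ n ih =>
    rw [Finset.sum_range_succ, ih]
    have : 0 < 2 ^ n := Nat.pow_pos (by norm_num)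
    rw [pow_succ]
    omega

/-- Splitting off the first term of a sum over `range Q`, `1 ≤ Q`. -/
private lemma sum_range_split (f : ℕ → ℕ) (Q : ℕ) (hQ : 1 ≤ Q) :
    ∑ t ∈ Finset.range Q, f t = (∑ t ∈ Finset.range (Q - 1), f (t + 1)) + f 0 := by
  obtain ⟨p, rfl⟩ : ∃ p, Q = p + 1 := ⟨Q - 1, by omega⟩
  rw [Nat.add_sub_cancel]
  exact Finset.sum_range_succ' f p

private lemma ccount_small (q : ℕ) (hq : 2 ≤ q) :
    ∀ i, 1 ≤ i → i ≤ q - 1 → ccount q i = 2 ^ (i - 1) := by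
  intro i
  induction i using Nat.strong_induction_on with
  | _ i ih =>
    intro hi1 hi2
    obtain ⟨i', rfl⟩ : ∃ i', i = i' + 1 := ⟨i - 1, by omega⟩
    rw [ccount_succ]
    have h1 : ∀ k ∈ Finset.range (i' + 1),
        (if (k+1) % q ≠ 0 then ccount q (i' - k) else 0) = ccount q (i' - k) := by
      intro k hk
      rw [Finset.mem_range] at hk
      rw [if_pos]
      rw [Nat.mod_eq_of_lt (by omega)]
      omega
    rw [Finset.sum_congr rfl h1]
    have hr : (∑ x ∈ Finset.range (i' + 1), ccount q (i' - x))
        = ∑ t ∈ Finset.range (i' + 1), ccount q t :=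
      Finset.sum_range_reflect (fun t => ccount q t) (i' + 1)
    rw [hr, Finset.sum_range_succ' (fun t => ccount q t) i']
    have h2 : ∀ t ∈ Finset.range i', ccount q (t + 1) = 2 ^ t := by
      intro t ht
      rw [Finset.mem_range] at ht
      rw [ih (t+1) (by omega) (by omega) (by omega)]
      simp
    rw [Finset.sum_congr rfl h2, ccount_zero, sum_two_pow]
    have : 0 < 2 ^ i' := Nat.pow_pos (by norm_num)
    simp only [Nat.add_sub_cancel]
    omega

/-- Fix `q ≥ 2` and let `U` satisfy `U_0 = 0`, `U_i = 2^{i−1}` for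
`1 ≤ i ≤ q−1`, and the generalized tribonacci recursion
`U_{n+q} = U_{n+q−1} + ⋯ + U_n`.  For every `n ≥ 1`, `U_n` equals the number of
compositions of `n` all of whose (positive) parts are not divisible by `q`. -/
theorem tribonacci_compositions_parts_not_div_q
    (q : ℕ) (hq : 2 ≤ q) (U : ℕ → ℕ)
    (hU0 : U 0 = 0)
    (hUi : ∀ i, 1 ≤ i → i ≤ q - 1 → U i = 2 ^ (i - 1))
    (hUrec : ∀ n, U (n + q) = ∑ j ∈ Finset.range q, U (n + j))
    (n : ℕ) (hn : 1 ≤ n) :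
    U n = {l : List ℕ | (∀ x ∈ l, 0 < x ∧ x % q ≠ 0) ∧ l.sum = n}.ncard := by
  have key : ∀ N, 1 ≤ N → U N = ccount q N := by
    intro N
    induction N using Nat.strong_induction_on with
    | _ N ih =>
      intro hN
      rcases lt_or_ge N q with h | h
      · rw [hUi N hN (by omega), ccount_small q hq N hN (by omega)]
      · obtain ⟨m, rfl⟩ : ∃ m, N = m + q := ⟨N - q, by omega⟩
        rw [hUrec m]
        rcases Nat.eq_zero_or_pos m with rfl | hm
        · -- N = q
          simp only [Nat.zero_add]
          have E := ccount_split q (q - 1)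
          rw [show q - 1 + 1 = q from by omega] at E
          have hB : bsum q q = ccount q 0 + bsum q 0 := by
            have := bsum_shift q 0 hq
            rwa [Nat.zero_add] at this
          have hb0 : bsum q 0 = 0 := by unfold bsum; simp
          have hU' := sum_range_split U q (by omega)
          have hc' := sum_range_split (ccount q) q (by omega)
          have hsums : (∑ t ∈ Finset.range (q - 1), U (t + 1))
              = ∑ t ∈ Finset.range (q - 1), ccount q (t + 1) := by
            refine Finset.sum_congr rfl ?_
            intro t ht
            rw [Finset.mem_range] at ht
            exact ih (t + 1) (by omega) (by omega)
          have hc0 := ccount_zero q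
          omega
        · rw [ccount_rec q m hq hm]
          refine Finset.sum_congr rfl ?_
          intro j hj
          rw [Finset.mem_range] at hj
          exact ih (m + j) (by omega) (by omega)
  have hset : {l : List ℕ | (∀ x ∈ l, 0 < x ∧ x % q ≠ 0) ∧ l.sum = n}
      = ↑((allComps n).filter (fun l => ∀ x ∈ l, x % q ≠ 0)) := by
    ext l
    simp only [Set.mem_setOf_eq, Finset.coe_filter, mem_allComps]
    constructor
    · rintro ⟨h1, h2⟩
      exact ⟨⟨fun x hx => (h1 x hx).1, h2⟩, fun x hx => (h1 x hx).2⟩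
    · rintro ⟨⟨h1, h2⟩, h3⟩
      exact ⟨fun x hx => ⟨h1 x hx, h3 x hx⟩, h2⟩
  rw [hset, Set.ncard_coe_finset]
  exact key n hn
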